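/- Let (X, w) be a weighted pure d-dimensional simplicial complex and let 1 ≤ i ≤ d. Then for every f ∈ C^0(X; ℝ), the i-up-down operator on 0-cochains satisfies U_0^i f = (1/(i+1)) f + (i/(i+1)) M_0^+ f; equivalently M_0^+ = ((i+1)/i) U_0^i − (1/i) I. -/

import Mathlib

/-!
Weighted pure simplicial complexes, links, cochains, signless differentials
and high dimensional random walk operators.

Conventions: faces are `Finset`s of vertices. A cochain "of dimension `k`"
(an element of `C^k(X;ℝ)`) is represented by a function `Finset V → ℝ`
evaluated on faces of **cardinality** `c = k + 1`; all operators are indexed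
by cardinality.
-/

open Finset

namespace HDRW

noncomputable section

variable {V : Type*} [DecidableEq V] [Fintype V]

/-- A weighted family of faces (the data of a weighted complex or of a link). -/
structure WFam (V : Type*) [DecidableEq V] [Fintype V] where
  faces : Finset (Finset V)
  w : Finset V → ℝ

namespace WFam

/-- The faces of cardinality `c` (i.e. of dimension `c - 1`). -/
def dimFaces (Y : WFam V) (c : ℕ) : Finset (Finset V) :=
  Y.faces.filter fun σ => σ.card = c

/-- The link of a face `τ`, as a weighted family; the weights are
`w_τ(s) = w (s ∪ τ) / (C(|s| + |τ|, |τ|) * w τ)`. -/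
def link (Y : WFam V) (τ : Finset V) : WFam V where
  faces := Finset.univ.powerset.filter fun s => Disjoint s τ ∧ s ∪ τ ∈ Y.faces
  w := fun s => Y.w (s ∪ τ) / (((s.card + τ.card).choose τ.card : ℝ) * Y.w τ)

/-- The inner product of two `c`-cochains: `⟨f, g⟩ = Σ_{σ} w σ * f σ * g σ`. -/
def inner (Y : WFam V) (c : ℕ) (f g : Finset V → ℝ) : ℝ :=
  ∑ σ ∈ Y.dimFaces c, Y.w σ * (f σ * g σ)

/-- The squared norm `‖f‖² = ⟨f, f⟩` of a `c`-cochain. -/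
def norm2 (Y : WFam V) (c : ℕ) (f : Finset V → ℝ) : ℝ := Y.inner c f f

end WFam

/-- The signless differential `d` from cochains on faces of cardinality `c`
(dimension `c-1`) to cochains on faces of cardinality `c+1`:
`(d f)(σ) = (1/(c+1)) Σ_{τ ⊆ σ, |τ| = c} f τ`. -/
def sDiff (c : ℕ) (f : Finset V → ℝ) : Finset V → ℝ :=
  fun σ => ((c : ℝ) + 1)⁻¹ * ∑ τ ∈ σ.powerset.filter (fun τ => τ.card = c), f τ

/-- Iterated signless differential `C_a → C_{a+n}` (in cardinality indexing),
i.e. `d_{a+n-2} ⋯ d_{a-1}` in dimension indexing. -/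
def sDiffIter (a : ℕ) : ℕ → (Finset V → ℝ) → (Finset V → ℝ)
  | 0, f => f
  | n + 1, f => sDiff (a + n) (sDiffIter a n f)

namespace WFam

/-- The adjoint `d^*` of the signless differential, from cochains on faces of
cardinality `c+1` to cochains on faces of cardinality `c`; it is given by the
explicit formula `(d^* f)(τ) = Σ_{σ ∈ X(c), τ ⊆ σ} w_τ(σ ∖ τ) * f σ` (a sum
over the cardinality-`(c+1)` faces containing `τ`). -/
def sAdj (Y : WFam V) (c : ℕ) (f : Finset V → ℝ) : Finset V → ℝ :=
  fun τ => ∑ σ ∈ (Y.dimFaces (c + 1)).filter (fun σ => τ ⊆ σ),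
    (Y.link τ).w (σ \ τ) * f σ

/-- Iterated adjoint of the signless differential, `C_{a+n} → C_a`
(in cardinality indexing), i.e. `d_{a-1}^* ⋯ d_{a+n-2}^*`. -/
def sAdjIter (Y : WFam V) : ℕ → ℕ → (Finset V → ℝ) → (Finset V → ℝ)
  | _, 0, f => f
  | a, n + 1, f => Y.sAdj a (sAdjIter Y (a + 1) n f)

/-- The non-lazy up-down random walk operator `M⁺` on cochains of cardinality
`c` (dimension `k = c-1`): `(M⁺ f)(σ) = (1/(k+1)) Σ_{τ, σ ∪ τ ∈ X(k+1)} w_σ(τ∖σ) f τ`. -/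
def nonLazy (Y : WFam V) (c : ℕ) (f : Finset V → ℝ) : Finset V → ℝ :=
  fun σ => (c : ℝ)⁻¹ *
    ∑ τ ∈ (Y.dimFaces c).filter (fun τ => σ ∪ τ ∈ Y.dimFaces (c + 1)),
      (Y.link σ).w (τ \ σ) * f τ

/-- The (lazy) up-down random walk operator `U` on cochains of cardinality `c`
(dimension `k = c-1`):
`(U f)(σ) = (1/(k+2)) f σ + (1/(k+2)) Σ_{τ, σ ∪ τ ∈ X(k+1)} w_σ(τ∖σ) f τ`. -/
def upDown (Y : WFam V) (c : ℕ) (f : Finset V → ℝ) : Finset V → ℝ :=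
  fun σ => ((c : ℝ) + 1)⁻¹ * f σ + ((c : ℝ) + 1)⁻¹ *
    ∑ τ ∈ (Y.dimFaces c).filter (fun τ => σ ∪ τ ∈ Y.dimFaces (c + 1)),
      (Y.link σ).w (τ \ σ) * f τ

/-- The down-up random walk operator `D` on cochains of cardinality `c`
(dimension `k = c-1`). -/
def downUp (Y : WFam V) (c : ℕ) (f : Finset V → ℝ) : Finset V → ℝ :=
  fun σ => (c : ℝ)⁻¹ *
      (∑ τ' ∈ σ.powerset.filter (fun τ' => τ'.card = c - 1), (Y.link τ').w (σ \ τ')) * f σ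
    + (c : ℝ)⁻¹ *
      ∑ τ ∈ (Y.dimFaces c).filter (fun τ => τ ≠ σ ∧ σ ∩ τ ∈ Y.dimFaces (c - 1)),
        (Y.link (σ ∩ τ)).w (τ \ σ) * f τ

/-- The `i`-down-up operator `D^i = d ⋯ d d^* ⋯ d^*` (going down `i+1` steps and
back up) on cochains of cardinality `c` (dimension `k = c-1`); in dimension
indexing this is `D_k^i = d_{k-1} ⋯ d_{k-i-1} d_{k-i-1}^* ⋯ d_{k-1}^*`. -/
def downUpIter (Y : WFam V) (c i : ℕ) (f : Finset V → ℝ) : Finset V → ℝ :=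
  sDiffIter (c - (i + 1)) (i + 1) (Y.sAdjIter (c - (i + 1)) (i + 1) f)

/-- `Y` (through its 1-skeleton) is a `γ`-(one sided) spectral expander:
every function on the vertices orthogonal to the constants has Rayleigh
quotient of the non-lazy random walk at most `γ` (Rayleigh characterization of
"the second largest eigenvalue of `M₀⁺` is at most `γ`"). -/
def isExpander (Y : WFam V) (γ : ℝ) : Prop :=
  ∀ f : Finset V → ℝ, Y.inner 1 f (fun _ => 1) = 0 →
    Y.inner 1 (Y.nonLazy 1 f) f ≤ γ * Y.norm2 1 f

/-- `Y` (through its 1-skeleton) is connected: the eigenvalue `1` of the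
non-lazy random walk `M₀⁺` has multiplicity one, i.e. every nonzero function on
the vertices orthogonal to the constants has Rayleigh quotient strictly
less than `1`. -/
def isConnected (Y : WFam V) : Prop :=
  ∀ f : Finset V → ℝ, Y.inner 1 f (fun _ => 1) = 0 → Y.norm2 1 f ≠ 0 →
    Y.inner 1 (Y.nonLazy 1 f) f < Y.norm2 1 f

/-- `f` is an `i`-level cochain of cardinality `c` (dimension `k = c-1`) with
respect to localization: for every face `σ` of cardinality `i` (i.e. of
dimension `i-1`), the localization `f_σ` is orthogonal to the constants in the
link `X_σ`. -/
def isLevel (Y : WFam V) (i c : ℕ) (f : Finset V → ℝ) : Prop :=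
  ∀ σ ∈ Y.dimFaces i,
    (Y.link σ).inner (c - i) (fun s => f (σ ∪ s)) (fun _ => 1) = 0

/-- `f` is a proper `i`-level cochain of cardinality `c`: it is an `i`-level
cochain which is in addition orthogonal to every `(i+1)`-level cochain. -/
def isProperLevel (Y : WFam V) (i c : ℕ) (f : Finset V → ℝ) : Prop :=
  Y.isLevel i c f ∧ ∀ g : Finset V → ℝ, Y.isLevel (i + 1) c g → Y.inner c f g = 0

end WFam

/-- The coboundary operator on oriented cochains (represented by their values
on the increasing ordering of each face, with respect to a linear order on the
vertices): `(δ f)(σ) = Σ_{j} (-1)^j f(σ ∖ {j-th smallest element of σ})`. -/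
def coboundary {V : Type*} [LinearOrder V] [Fintype V] (f : Finset V → ℝ) :
    Finset V → ℝ :=
  fun σ => ∑ v ∈ σ, (-1 : ℝ) ^ (σ.filter (fun u => u < v)).card * f (σ.erase v)

/-- A weighted pure `d`-dimensional simplicial complex: a downward closed
family of faces, each contained in a face of cardinality `d+1`
(dimension `d`), together with a weight function `w : X → (0, 1]` summing to
`1` on the top faces and satisfying the averaging recurrence on lower faces. -/
structure WSC (V : Type*) [DecidableEq V] [Fintype V] (d : ℕ) extends WFam V where
  empty_mem : ∅ ∈ faces
  down_closed : ∀ ⦃σ⦄, σ ∈ faces → ∀ ⦃τ⦄, τ ⊆ σ → τ ∈ faces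
  isPure : ∀ σ ∈ faces, ∃ σ' ∈ faces, σ ⊆ σ' ∧ σ'.card = d + 1
  w_pos : ∀ σ ∈ faces, 0 < w σ
  w_le_one : ∀ σ ∈ faces, w σ ≤ 1
  w_sum_top : ∑ σ ∈ faces.filter (fun σ => σ.card = d + 1), w σ = 1
  w_down : ∀ τ ∈ faces, τ.card ≤ d →
    w τ = (((d + 1).choose τ.card : ℝ))⁻¹ *
      ∑ σ ∈ faces.filter (fun σ => σ.card = d + 1 ∧ τ ⊆ σ), w σ


variable {d : ℕ}

lemma card_between {α : Type*} [DecidableEq α] {τ t : Finset α} (h : τ ⊆ t) {c : ℕ}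
    (hc : τ.card ≤ c) :
    (t.powerset.filter fun σ => τ ⊆ σ ∧ σ.card = c).card
      = (t.card - τ.card).choose (c - τ.card) := by
  have : (t.powerset.filter fun σ => τ ⊆ σ ∧ σ.card = c).card
      = (Finset.powersetCard (c - τ.card) (t \ τ)).card := by
    apply Finset.card_bij' (fun σ _ => σ \ τ) (fun s _ => s ∪ τ)
    · intro σ hσ
      simp only [mem_filter, mem_powerset] at hσ
      rw [Finset.mem_powersetCard]
      exact ⟨sdiff_subset_sdiff hσ.1 le_rfl, by rw [card_sdiff_of_subset hσ.2.1, hσ.2.2]⟩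
    · intro s hs
      rw [Finset.mem_powersetCard] at hs
      have hdisj : Disjoint s τ := disjoint_of_subset_left hs.1 sdiff_disjoint
      simp only [mem_filter, mem_powerset]
      refine ⟨union_subset (hs.1.trans sdiff_subset) h, subset_union_right, ?_⟩
      rw [card_union_of_disjoint hdisj, hs.2, Nat.sub_add_cancel hc]
    · intro σ hσ
      simp only [mem_filter, mem_powerset] at hσ
      exact sdiff_union_of_subset hσ.2.1
    · intro s hs
      rw [Finset.mem_powersetCard] at hs
      have hdisj : Disjoint s τ := disjoint_of_subset_left hs.1 sdiff_disjoint
      exact union_sdiff_cancel_right hdisj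
  rw [this, Finset.card_powersetCard, card_sdiff_of_subset h]

lemma swap_sum {α : Type*} (F : Finset α) (P : α → Prop) [DecidablePred P]
    (Q : α → α → Prop) [∀ a, DecidablePred (Q a)] (h g : α → ℝ) :
    ∑ a ∈ F.filter P, ∑ b ∈ F.filter (Q a), h a * g b
      = ∑ b ∈ F, (∑ a ∈ F.filter fun a => P a ∧ Q a b, h a) * g b := by
  have : ∀ b ∈ F, (∑ a ∈ F.filter fun a => P a ∧ Q a b, h a) * g b
      = ∑ a ∈ F, if P a ∧ Q a b then h a * g b else 0 := by
    intro b _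
    rw [Finset.sum_filter, Finset.sum_mul]
    refine Finset.sum_congr rfl fun a _ => ?_
    split <;> simp
  rw [Finset.sum_congr rfl this, Finset.sum_comm]
  rw [Finset.sum_filter]
  refine Finset.sum_congr rfl fun a _ => ?_
  by_cases hP : P a
  · simp only [hP, if_true, true_and, Finset.sum_filter]
  · simp [hP]


/-- The sum of the weights of the cardinality-`c` faces containing a given face. -/
lemma WSC.sum_w (X : WSC V d) {τ : Finset V} (hτ : τ ∈ X.faces) {c : ℕ}
    (htc : τ.card ≤ c) (hc : c ≤ d + 1) :
    ∑ σ ∈ X.faces.filter (fun σ => σ.card = c ∧ τ ⊆ σ), X.w σ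
      = (((d + 1 - τ.card).choose (c - τ.card) * ((d + 1).choose τ.card) : ℝ)
          / ((d + 1).choose c)) * X.w τ := by
  rcases eq_or_lt_of_le hc with hc1 | hcd
  · -- c = d + 1
    subst hc1
    rcases eq_or_lt_of_le htc with ht1 | htd
    · -- τ.card = d + 1 : the only σ is τ itself
      have : X.faces.filter (fun σ => σ.card = d + 1 ∧ τ ⊆ σ) = {τ} := by
        ext σ
        simp only [mem_filter, mem_singleton]
        constructor
        · rintro ⟨_, hcard, hsub⟩
          exact (Finset.eq_of_subset_of_card_le hsub (by omega)).symm
        · rintro rfl; exact ⟨hτ, ht1, subset_rfl⟩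
      rw [this, Finset.sum_singleton, ← ht1]
      simp
    · -- τ.card ≤ d
      have hd := X.w_down τ hτ (by omega)
      have hne : (((d + 1).choose τ.card : ℝ)) ≠ 0 :=
        Nat.cast_ne_zero.mpr (Nat.choose_pos (by omega)).ne'
      have hset : X.faces.filter (fun σ => σ.card = d + 1 ∧ τ ⊆ σ) =
          X.faces.filter (fun σ => σ.card = d + 1 ∧ τ ⊆ σ) := rfl
      rw [show (∑ σ ∈ X.faces.filter (fun σ => σ.card = d + 1 ∧ τ ⊆ σ), X.w σ)
          = ((d + 1).choose τ.card : ℝ) * X.w τ by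
        rw [hd]; field_simp]
      rw [Nat.choose_self, Nat.choose_self]
      norm_num
  · -- c ≤ d
    have hcd' : c ≤ d := by omega
    have hCc : (((d + 1).choose c : ℝ)) ≠ 0 :=
      Nat.cast_ne_zero.mpr (Nat.choose_pos (by omega)).ne'
    have hstep1 : ∑ σ ∈ X.faces.filter (fun σ => σ.card = c ∧ τ ⊆ σ), X.w σ
        = ∑ σ ∈ X.faces.filter (fun σ => σ.card = c ∧ τ ⊆ σ),
            ∑ t ∈ X.faces.filter (fun t => t.card = d + 1 ∧ σ ⊆ t),
              (((d + 1).choose c : ℝ))⁻¹ * X.w t := by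
      refine Finset.sum_congr rfl fun σ hσ => ?_
      simp only [mem_filter] at hσ
      obtain ⟨h1, h2, h3⟩ := hσ
      have hw := X.w_down σ h1 (by omega)
      rw [h2] at hw
      rw [hw, Finset.mul_sum]
    rw [hstep1]
    rw [show (∑ σ ∈ X.faces.filter (fun σ => σ.card = c ∧ τ ⊆ σ),
            ∑ t ∈ X.faces.filter (fun t => t.card = d + 1 ∧ σ ⊆ t),
              (((d + 1).choose c : ℝ))⁻¹ * X.w t)
        = ∑ t ∈ X.faces,
            (∑ σ ∈ X.faces.filter (fun σ => (σ.card = c ∧ τ ⊆ σ) ∧ t.card = d + 1 ∧ σ ⊆ t),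
              (((d + 1).choose c : ℝ))⁻¹) * X.w t from
      swap_sum X.faces _ _ _ _]
    -- evaluate the inner count
    have hcount : ∀ t ∈ X.faces,
        (∑ σ ∈ X.faces.filter (fun σ => (σ.card = c ∧ τ ⊆ σ) ∧ t.card = d + 1 ∧ σ ⊆ t),
          (((d + 1).choose c : ℝ))⁻¹) * X.w t
        = if t.card = d + 1 ∧ τ ⊆ t then
            ((d + 1 - τ.card).choose (c - τ.card) : ℝ) * (((d + 1).choose c : ℝ))⁻¹ * X.w t
          else 0 := by
      intro t ht
      by_cases hR : t.card = d + 1 ∧ τ ⊆ t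
      · rw [if_pos hR]
        have hfe : X.faces.filter (fun σ => (σ.card = c ∧ τ ⊆ σ) ∧ t.card = d + 1 ∧ σ ⊆ t)
            = t.powerset.filter (fun σ => τ ⊆ σ ∧ σ.card = c) := by
          ext σ
          simp only [mem_filter, mem_powerset]
          constructor
          · rintro ⟨_, ⟨hcard, hts⟩, _, hst⟩; exact ⟨hst, hts, hcard⟩
          · rintro ⟨hst, hts, hcard⟩
            exact ⟨X.down_closed ht hst, ⟨hcard, hts⟩, hR.1, hst⟩
        rw [hfe, Finset.sum_const, card_between hR.2 htc, hR.1, nsmul_eq_mul]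
      · rw [if_neg hR]
        have : X.faces.filter (fun σ => (σ.card = c ∧ τ ⊆ σ) ∧ t.card = d + 1 ∧ σ ⊆ t) = ∅ := by
          rw [Finset.filter_eq_empty_iff]
          rintro σ _ ⟨⟨hcard, hts⟩, h1, hst⟩
          exact hR ⟨h1, hts.trans hst⟩
        rw [this, Finset.sum_empty, zero_mul]
    rw [Finset.sum_congr rfl hcount, ← Finset.sum_filter]
    have hd := X.w_down τ hτ (by omega)
    have hCt : (((d + 1).choose τ.card : ℝ)) ≠ 0 :=
      Nat.cast_ne_zero.mpr (Nat.choose_pos (by omega)).ne'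
    have hsum : ∑ t ∈ X.faces.filter (fun t => t.card = d + 1 ∧ τ ⊆ t), X.w t
        = ((d + 1).choose τ.card : ℝ) * X.w τ := by
      rw [hd]; field_simp
    rw [show (∑ t ∈ X.faces.filter (fun t => t.card = d + 1 ∧ τ ⊆ t),
          ((d + 1 - τ.card).choose (c - τ.card) : ℝ) * (((d + 1).choose c : ℝ))⁻¹ * X.w t)
        = ((d + 1 - τ.card).choose (c - τ.card) : ℝ) * (((d + 1).choose c : ℝ))⁻¹ *
          ∑ t ∈ X.faces.filter (fun t => t.card = d + 1 ∧ τ ⊆ t), X.w t from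
      (Finset.mul_sum _ _ _).symm]
    rw [hsum]
    field_simp


/-- Closed formula for the iterated adjoint differential. -/
lemma WSC.sAdjIter_apply (X : WSC V d) (n : ℕ) :
    ∀ (a : ℕ) (g : Finset V → ℝ) (τ : Finset V), τ ∈ X.faces → τ.card = a →
    X.toWFam.sAdjIter a n g τ
      = ((a.factorial * n.factorial : ℝ) / (a + n).factorial) *
        ∑ σ ∈ X.faces.filter (fun σ => σ.card = a + n ∧ τ ⊆ σ), (X.w σ / X.w τ) * g σ := by
  induction n with
  | zero =>
    intro a g τ hτ hcard
    have hw : X.w τ ≠ 0 := (X.w_pos τ hτ).ne'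
    have hset : X.faces.filter (fun σ => σ.card = a + 0 ∧ τ ⊆ σ) = {τ} := by
      ext σ
      simp only [mem_filter, mem_singleton]
      constructor
      · rintro ⟨_, hc, hsub⟩
        exact (Finset.eq_of_subset_of_card_le hsub (by omega)).symm
      · rintro rfl; exact ⟨hτ, by omega, subset_rfl⟩
    rw [hset, Finset.sum_singleton, div_self hw, one_mul]
    show g τ = _
    rw [Nat.add_zero, Nat.factorial_zero]
    have : (a.factorial : ℝ) ≠ 0 := Nat.cast_ne_zero.mpr a.factorial_ne_zero
    field_simp
    simp
  | succ n ih =>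
    intro a g τ hτ hcard
    have hwτ : X.w τ ≠ 0 := (X.w_pos τ hτ).ne'
    show X.toWFam.sAdj a (X.toWFam.sAdjIter (a+1) n g) τ = _
    rw [WFam.sAdj]
    rw [show (X.toWFam.dimFaces (a + 1)).filter (fun σ => τ ⊆ σ)
        = X.faces.filter (fun σ' => σ'.card = a + 1 ∧ τ ⊆ σ') from by
      rw [WFam.dimFaces, Finset.filter_filter]]
    set K : ℝ := ((a:ℝ)+1)⁻¹ * (X.w τ)⁻¹ *
      (((a+1).factorial * n.factorial : ℝ) / (a+1+n).factorial) with hK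
    have hterm : ∀ σ' ∈ X.faces.filter (fun σ' => σ'.card = a + 1 ∧ τ ⊆ σ'),
        (X.toWFam.link τ).w (σ' \ τ) * X.toWFam.sAdjIter (a+1) n g σ'
        = ∑ σ ∈ X.faces.filter (fun σ => σ.card = a + 1 + n ∧ σ' ⊆ σ),
            K * (X.w σ * g σ) := by
      intro σ' hσ'
      simp only [mem_filter] at hσ'
      obtain ⟨hm, hc1, hsub⟩ := hσ'
      have hwσ' : X.w σ' ≠ 0 := (X.w_pos σ' hm).ne'
      have hlink : (X.toWFam.link τ).w (σ' \ τ) = X.w σ' / (((a:ℝ)+1) * X.w τ) := by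
        simp only [WFam.link]
        rw [sdiff_union_of_subset hsub, card_sdiff_of_subset hsub, hcard, hc1]
        rw [show a + 1 - a = 1 from by omega, show 1 + a = a + 1 from by omega,
          Nat.choose_succ_self_right]
        push_cast
        ring
      rw [hlink, ih (a+1) g σ' hm hc1]
      simp only [Finset.mul_sum]
      refine Finset.sum_congr rfl fun σ hσ => ?_
      rw [hK]
      field_simp
    rw [Finset.sum_congr rfl hterm]
    rw [swap_sum X.faces (fun σ' => σ'.card = a + 1 ∧ τ ⊆ σ')
      (fun σ' σ => σ.card = a + 1 + n ∧ σ' ⊆ σ) (fun _ => K) (fun σ => X.w σ * g σ)]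
    have hcount : ∀ σ ∈ X.faces,
        (∑ σ' ∈ X.faces.filter
            (fun σ' => (σ'.card = a + 1 ∧ τ ⊆ σ') ∧ σ.card = a + 1 + n ∧ σ' ⊆ σ), K)
          * (X.w σ * g σ)
        = if σ.card = a + (n + 1) ∧ τ ⊆ σ then
            (((a.factorial * (n+1).factorial : ℝ) / (a + (n+1)).factorial))
              * ((X.w σ / X.w τ) * g σ)
          else 0 := by
      intro σ hσ
      by_cases hR : σ.card = a + (n + 1) ∧ τ ⊆ σ
      · rw [if_pos hR]
        have hfe : X.faces.filter
            (fun σ' => (σ'.card = a + 1 ∧ τ ⊆ σ') ∧ σ.card = a + 1 + n ∧ σ' ⊆ σ)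
            = σ.powerset.filter (fun σ' => τ ⊆ σ' ∧ σ'.card = a + 1) := by
          ext σ'
          simp only [mem_filter, mem_powerset]
          constructor
          · rintro ⟨_, ⟨h1, h2⟩, _, h3⟩; exact ⟨h3, h2, h1⟩
          · rintro ⟨h3, h2, h1⟩
            exact ⟨X.down_closed hσ h3, ⟨h1, h2⟩, by omega, h3⟩
        rw [hfe, Finset.sum_const, card_between hR.2 (by omega), hR.1, nsmul_eq_mul]
        rw [show a + (n + 1) - τ.card = n + 1 from by omega,
          show a + 1 - τ.card = 1 from by omega, Nat.choose_one_right]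
        rw [hK]
        have h1 : (a.factorial : ℝ) ≠ 0 := Nat.cast_ne_zero.mpr a.factorial_ne_zero
        have h2 : (((a+1+n).factorial : ℝ)) ≠ 0 := Nat.cast_ne_zero.mpr (a+1+n).factorial_ne_zero
        have h3 : ((n.factorial : ℝ)) ≠ 0 := Nat.cast_ne_zero.mpr n.factorial_ne_zero
        rw [show a + (n+1) = a + 1 + n from by omega]
        rw [Nat.factorial_succ (a), Nat.factorial_succ n]
        push_cast
        field_simp
      · rw [if_neg hR]
        have : X.faces.filter
            (fun σ' => (σ'.card = a + 1 ∧ τ ⊆ σ') ∧ σ.card = a + 1 + n ∧ σ' ⊆ σ) = ∅ := by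
          rw [Finset.filter_eq_empty_iff]
          rintro σ' _ ⟨⟨h1, h2⟩, h3, h4⟩
          exact hR ⟨by omega, h2.trans h4⟩
        rw [this, Finset.sum_empty, zero_mul]
    rw [Finset.sum_congr rfl hcount, ← Finset.sum_filter, ← Finset.mul_sum]


/-- Closed formula for the iterated signless differential from `0`-cochains. -/
lemma sDiffIter_one_apply (i : ℕ) (f : Finset V → ℝ) :
    ∀ σ : Finset V, σ.card = i + 1 →
    sDiffIter 1 i f σ
      = ((i : ℝ) + 1)⁻¹ * ∑ ρ ∈ σ.powerset.filter (fun ρ => ρ.card = 1), f ρ := by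
  induction i with
  | zero =>
    intro σ hσ
    have hset : σ.powerset.filter (fun ρ => ρ.card = 1) = {σ} := by
      ext ρ
      simp only [mem_filter, mem_powerset, mem_singleton]
      constructor
      · rintro ⟨h1, h2⟩
        exact Finset.eq_of_subset_of_card_le h1 (by omega)
      · rintro rfl; exact ⟨subset_rfl, by omega⟩
    rw [hset, Finset.sum_singleton]
    show f σ = _
    norm_num
  | succ i ih =>
    intro σ hσ
    show sDiff (1 + i) (sDiffIter 1 i f) σ = _
    rw [sDiff]
    have hterm : ∀ τ ∈ σ.powerset.filter (fun τ => τ.card = 1 + i),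
        sDiffIter 1 i f τ = ∑ ρ ∈ σ.powerset.filter (fun ρ => ρ.card = 1 ∧ ρ ⊆ τ),
          ((i : ℝ) + 1)⁻¹ * f ρ := by
      intro τ hτ
      simp only [mem_filter, mem_powerset] at hτ
      have hset : τ.powerset.filter (fun ρ => ρ.card = 1)
          = σ.powerset.filter (fun ρ => ρ.card = 1 ∧ ρ ⊆ τ) := by
        ext ρ
        simp only [mem_filter, mem_powerset]
        constructor
        · rintro ⟨h1, h2⟩; exact ⟨h1.trans hτ.1, h2, h1⟩
        · rintro ⟨_, h2, h3⟩; exact ⟨h3, h2⟩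
      rw [ih τ (by omega), hset, Finset.mul_sum]
    rw [Finset.sum_congr rfl hterm]
    rw [swap_sum σ.powerset (fun τ => τ.card = 1 + i) (fun τ ρ => ρ.card = 1 ∧ ρ ⊆ τ)
      (fun _ => ((i : ℝ) + 1)⁻¹) f]
    have hcount : ∀ ρ ∈ σ.powerset,
        (∑ τ ∈ σ.powerset.filter (fun τ => τ.card = 1 + i ∧ ρ.card = 1 ∧ ρ ⊆ τ),
          ((i : ℝ) + 1)⁻¹) * f ρ
        = if ρ.card = 1 then f ρ else 0 := by
      intro ρ hρ
      rw [mem_powerset] at hρ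
      by_cases h1 : ρ.card = 1
      · rw [if_pos h1]
        have hfe : σ.powerset.filter (fun τ => τ.card = 1 + i ∧ ρ.card = 1 ∧ ρ ⊆ τ)
            = σ.powerset.filter (fun τ => ρ ⊆ τ ∧ τ.card = 1 + i) := by
          ext τ
          simp only [mem_filter, mem_powerset]
          constructor
          · rintro ⟨hs, hc, _, hsub⟩; exact ⟨hs, hsub, hc⟩
          · rintro ⟨hs, hsub, hc⟩; exact ⟨hs, hc, h1, hsub⟩
        rw [hfe, Finset.sum_const, card_between hρ (by omega), hσ, h1]
        rw [show i + 1 + 1 - 1 = i + 1 from by omega, show 1 + i - 1 = i from by omega,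
          Nat.choose_succ_self_right, nsmul_eq_mul]
        have : ((i : ℝ) + 1) ≠ 0 := by positivity
        push_cast
        field_simp
      · rw [if_neg h1]
        have : σ.powerset.filter (fun τ => τ.card = 1 + i ∧ ρ.card = 1 ∧ ρ ⊆ τ) = ∅ := by
          rw [Finset.filter_eq_empty_iff]
          rintro τ _ ⟨_, hc, _⟩
          exact h1 hc
        rw [this, Finset.sum_empty, zero_mul]
    rw [Finset.sum_congr rfl hcount, ← Finset.sum_filter]
    push_cast
    ring


lemma choose_ratio1 {i d : ℕ} (h : i ≤ d) :
    ((d + 1 - 1).choose (i + 1 - 1) : ℝ) * (((d + 1).choose 1 : ℕ) : ℝ) / ((d + 1).choose (i + 1))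
      = (i : ℝ) + 1 := by
  have hD : (((d + 1).choose (i + 1) : ℕ) : ℝ) ≠ 0 :=
    Nat.cast_ne_zero.mpr (Nat.choose_pos (by omega)).ne'
  rw [div_eq_iff hD]
  have n2 : (d + 1) * d.choose i = (d + 1).choose (i + 1) * (i + 1) :=
    Nat.add_one_mul_choose_eq d i
  have c2 : ((d : ℝ) + 1) * (d.choose i : ℝ) = ((d + 1).choose (i + 1) : ℝ) * ((i : ℝ) + 1) := by
    exact_mod_cast congrArg (fun n : ℕ => (n : ℝ)) n2
  simp only [Nat.add_sub_cancel, Nat.choose_one_right]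
  push_cast
  linear_combination c2

lemma choose_ratio2 {i d : ℕ} (h1 : 1 ≤ i) (h2 : i ≤ d) :
    ((d + 1 - 2).choose (i + 1 - 2) : ℝ) * (((d + 1).choose 2 : ℕ) : ℝ) / ((d + 1).choose (i + 1))
      = (i : ℝ) * ((i : ℝ) + 1) / 2 := by
  obtain ⟨i, rfl⟩ : ∃ i', i = i' + 1 := ⟨i - 1, by omega⟩
  obtain ⟨d, rfl⟩ : ∃ d', d = d' + 1 := ⟨d - 1, by omega⟩
  have hid : i ≤ d := by omega
  have hD : (((d + 1 + 1).choose (i + 1 + 1) : ℕ) : ℝ) ≠ 0 :=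
    Nat.cast_ne_zero.mpr (Nat.choose_pos (by omega)).ne'
  rw [show d + 1 + 1 - 2 = d from by omega, show i + 1 + 1 - 2 = i from by omega,
    div_eq_iff hD]
  have n1 : (d + 1 + 1) * (d + 1).choose 1 = (d + 1 + 1).choose 2 * 2 :=
    Nat.add_one_mul_choose_eq (d + 1) 1
  rw [Nat.choose_one_right] at n1
  have n2 : (d + 1) * d.choose i = (d + 1).choose (i + 1) * (i + 1) :=
    Nat.add_one_mul_choose_eq d i
  have n3 : (d + 1 + 1) * (d + 1).choose (i + 1) = (d + 1 + 1).choose (i + 1 + 1) * (i + 1 + 1) :=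
    Nat.add_one_mul_choose_eq (d + 1) (i + 1)
  have c1 : ((d : ℝ) + 2) * ((d : ℝ) + 1) = ((d + 1 + 1).choose 2 : ℝ) * 2 := by
    exact_mod_cast congrArg (fun n : ℕ => (n : ℝ)) n1
  have c2 : ((d : ℝ) + 1) * (d.choose i : ℝ) = ((d + 1).choose (i + 1) : ℝ) * ((i : ℝ) + 1) := by
    exact_mod_cast congrArg (fun n : ℕ => (n : ℝ)) n2
  have c3 : ((d : ℝ) + 2) * ((d + 1).choose (i + 1) : ℝ)
      = ((d + 1 + 1).choose (i + 1 + 1) : ℝ) * ((i : ℝ) + 2) := by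
    exact_mod_cast congrArg (fun n : ℕ => (n : ℝ)) n3
  push_cast
  linear_combination (-(d.choose i : ℝ) / 2) * c1 + (((d : ℝ) + 2) / 2) * c2
    + (((i : ℝ) + 1) / 2) * c3

lemma singleton_disjoint_of_ne {v ρ : Finset V} (hv : v.card = 1) (hρ : ρ.card = 1)
    (h : ρ ≠ v) : Disjoint ρ v := by
  obtain ⟨x, rfl⟩ := Finset.card_eq_one.mp hv
  obtain ⟨y, rfl⟩ := Finset.card_eq_one.mp hρ
  rw [Finset.disjoint_singleton]
  intro hxy
  exact h (by rw [hxy])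

lemma card_union_two {v ρ : Finset V} (hv : v.card = 1) (hρ : ρ.card = 1)
    (h : ρ ≠ v) : (v ∪ ρ).card = 2 := by
  have hd := singleton_disjoint_of_ne hv hρ h
  rw [card_union_of_disjoint hd.symm, hv, hρ]


/-- For `1 ≤ i ≤ d` and every `f ∈ C^0(X;ℝ)`, the `i`-up-down
operator on `0`-cochains satisfies
`U_0^i f = (1/(i+1)) f + (i/(i+1)) M_0^+ f` (equivalently
`M_0^+ = ((i+1)/i) U_0^i - (1/i) I`), where
`U_0^i = d_0^* ⋯ d_{i-1}^* d_{i-1} ⋯ d_0`. -/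
theorem upDownIter_eq_nonLazy (X : WSC V d) (i : ℕ) (hi1 : 1 ≤ i) (hid : i ≤ d)
    (f : Finset V → ℝ) :
    ∀ v ∈ X.toWFam.dimFaces 1,
      X.toWFam.sAdjIter 1 i (sDiffIter 1 i f) v =
        ((i : ℝ) + 1)⁻¹ * f v + ((i : ℝ) / ((i : ℝ) + 1)) * X.toWFam.nonLazy 1 f v := by
  intro v hv
  simp only [WFam.dimFaces, mem_filter] at hv
  obtain ⟨hvF, hv1⟩ := hv
  have hwv : X.w v ≠ 0 := (X.w_pos v hvF).ne'
  have hi0 : ((i : ℝ) + 1) ≠ 0 := by positivity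
  rw [X.sAdjIter_apply i 1 (sDiffIter 1 i f) v hvF hv1,
    show 1 + i = i + 1 from Nat.add_comm 1 i]
  -- rewrite each term of the sum
  have hterm : ∀ σ ∈ X.faces.filter (fun σ => σ.card = i + 1 ∧ v ⊆ σ),
      (X.w σ / X.w v) * sDiffIter 1 i f σ
      = X.w σ * (((i : ℝ) + 1)⁻¹ * f v / X.w v)
        + ∑ ρ ∈ X.faces.filter (fun ρ => (ρ.card = 1 ∧ ρ ⊆ σ) ∧ ρ ≠ v),
            (((i : ℝ) + 1)⁻¹ * (X.w σ / X.w v)) * f ρ := by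
    intro σ hσ
    rw [mem_filter] at hσ
    obtain ⟨hm, hc, hsub⟩ := hσ
    rw [sDiffIter_one_apply i f σ hc]
    have hvmem : v ∈ σ.powerset.filter (fun ρ => ρ.card = 1) := by
      simp only [mem_filter, mem_powerset]; exact ⟨hsub, hv1⟩
    rw [← Finset.add_sum_erase _ f hvmem]
    have hE : (σ.powerset.filter (fun ρ => ρ.card = 1)).erase v
        = X.faces.filter (fun ρ => (ρ.card = 1 ∧ ρ ⊆ σ) ∧ ρ ≠ v) := by
      ext ρ
      simp only [mem_erase, mem_filter, mem_powerset]
      constructor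
      · rintro ⟨hne, hsub', hc1⟩; exact ⟨X.down_closed hm hsub', ⟨hc1, hsub'⟩, hne⟩
      · rintro ⟨_, ⟨hc1, hsub'⟩, hne⟩; exact ⟨hne, hsub', hc1⟩
    rw [hE, ← Finset.mul_sum]
    ring
  rw [Finset.sum_congr rfl hterm, Finset.sum_add_distrib, ← Finset.sum_mul]
  -- term A: the sum of the weights of the (i+1)-faces containing v
  have hA : ∑ σ ∈ X.faces.filter (fun σ => σ.card = i + 1 ∧ v ⊆ σ), X.w σ
      = ((i : ℝ) + 1) * X.w v := by
    rw [X.sum_w hvF (by omega) (by omega), hv1]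
    rw [choose_ratio1 hid]
  rw [hA]
  rw [swap_sum X.faces (fun σ => σ.card = i + 1 ∧ v ⊆ σ)
    (fun σ ρ => (ρ.card = 1 ∧ ρ ⊆ σ) ∧ ρ ≠ v)
    (fun σ => ((i : ℝ) + 1)⁻¹ * (X.w σ / X.w v)) f]
  have hkey : ∀ ρ ∈ X.faces,
      (∑ σ ∈ X.faces.filter
          (fun σ => (σ.card = i + 1 ∧ v ⊆ σ) ∧ (ρ.card = 1 ∧ ρ ⊆ σ) ∧ ρ ≠ v),
        ((i : ℝ) + 1)⁻¹ * (X.w σ / X.w v)) * f ρ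
      = if ρ.card = 1 ∧ v ∪ ρ ∈ X.toWFam.dimFaces 2 then
          (((i : ℝ) + 1)⁻¹ * ((i : ℝ) * ((i : ℝ) + 1) / 2) * (X.w (v ∪ ρ) / X.w v)) * f ρ
        else 0 := by
    intro ρ hρ
    by_cases hcond : ρ.card = 1 ∧ v ∪ ρ ∈ X.toWFam.dimFaces 2
    · rw [if_pos hcond]
      obtain ⟨hρ1, h2⟩ := hcond
      simp only [WFam.dimFaces, mem_filter] at h2
      obtain ⟨hvρF, hvρ2⟩ := h2
      have hρv : ρ ≠ v := by
        rintro rfl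
        rw [Finset.union_self] at hvρ2
        omega
      have hfe : X.faces.filter
          (fun σ => (σ.card = i + 1 ∧ v ⊆ σ) ∧ (ρ.card = 1 ∧ ρ ⊆ σ) ∧ ρ ≠ v)
          = X.faces.filter (fun σ => σ.card = i + 1 ∧ v ∪ ρ ⊆ σ) := by
        ext σ
        simp only [mem_filter]
        constructor
        · rintro ⟨hm, ⟨hc, hvs⟩, ⟨_, hρs⟩, _⟩
          exact ⟨hm, hc, union_subset hvs hρs⟩
        · rintro ⟨hm, hc, hsub⟩
          exact ⟨hm, ⟨hc, subset_union_left.trans hsub⟩,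
            ⟨hρ1, subset_union_right.trans hsub⟩, hρv⟩
      have hre : ∀ σ ∈ X.faces.filter (fun σ => σ.card = i + 1 ∧ v ∪ ρ ⊆ σ),
          ((i : ℝ) + 1)⁻¹ * (X.w σ / X.w v) = X.w σ * (((i : ℝ) + 1)⁻¹ / X.w v) :=
        fun σ _ => by ring
      rw [hfe, Finset.sum_congr rfl hre, ← Finset.sum_mul,
        X.sum_w hvρF (by omega) (by omega), hvρ2, choose_ratio2 hi1 hid]
      ring
    · rw [if_neg hcond]
      have hempty : X.faces.filter
          (fun σ => (σ.card = i + 1 ∧ v ⊆ σ) ∧ (ρ.card = 1 ∧ ρ ⊆ σ) ∧ ρ ≠ v) = ∅ := by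
        rw [Finset.filter_eq_empty_iff]
        rintro σ hσ ⟨⟨hc, hvs⟩, ⟨hρ1, hρs⟩, hρv⟩
        refine hcond ⟨hρ1, ?_⟩
        have hsub : v ∪ ρ ⊆ σ := union_subset hvs hρs
        simp only [WFam.dimFaces, mem_filter]
        exact ⟨X.down_closed hσ hsub, card_union_two hv1 hρ1 hρv⟩
      rw [hempty, Finset.sum_empty, zero_mul]
  rw [Finset.sum_congr rfl hkey]
  -- the right-hand side
  have hset1 : (X.toWFam.dimFaces 1).filter (fun τ => v ∪ τ ∈ X.toWFam.dimFaces (1 + 1))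
      = X.faces.filter (fun τ => τ.card = 1 ∧ v ∪ τ ∈ X.toWFam.dimFaces 2) := by
    ext τ
    simp only [WFam.dimFaces, mem_filter]
    constructor
    · rintro ⟨⟨h1, h2⟩, h3, h4⟩; exact ⟨h1, h2, h3, by omega⟩
    · rintro ⟨h1, h2, h3, h4⟩; exact ⟨⟨h1, h2⟩, h3, by omega⟩
  have hlk : ∀ τ ∈ X.faces.filter (fun τ => τ.card = 1 ∧ v ∪ τ ∈ X.toWFam.dimFaces 2),
      (X.toWFam.link v).w (τ \ v) * f τ = (X.w (v ∪ τ) / (2 * X.w v)) * f τ := by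
    intro τ hτ
    simp only [mem_filter, WFam.dimFaces] at hτ
    obtain ⟨hτF, hτ1, hvτF, hvτ2⟩ := hτ
    have hτv : τ ≠ v := by
      rintro rfl
      rw [Finset.union_self] at hvτ2
      omega
    have hd : Disjoint τ v := singleton_disjoint_of_ne hv1 hτ1 hτv
    simp only [WFam.link]
    rw [Finset.sdiff_eq_self_of_disjoint hd, Finset.union_comm τ v, hτ1, hv1]
    norm_num
  have hnl : X.toWFam.nonLazy 1 f v
      = ∑ ρ ∈ X.faces, (if ρ.card = 1 ∧ v ∪ ρ ∈ X.toWFam.dimFaces 2 then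
          (X.w (v ∪ ρ) / (2 * X.w v)) * f ρ else 0) := by
    simp only [WFam.nonLazy]
    rw [hset1, Finset.sum_congr rfl hlk, Finset.sum_filter]
    norm_num
  rw [hnl]
  rw [mul_add, Finset.mul_sum, Finset.mul_sum]
  congr 1
  · rw [Nat.factorial_one, Nat.factorial_succ]
    have hfac : ((i.factorial : ℝ)) ≠ 0 := Nat.cast_ne_zero.mpr i.factorial_ne_zero
    push_cast
    field_simp
  · refine Finset.sum_congr rfl fun ρ hρ => ?_
    by_cases hcond : ρ.card = 1 ∧ v ∪ ρ ∈ X.toWFam.dimFaces 2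
    · rw [if_pos hcond, if_pos hcond, Nat.factorial_one, Nat.factorial_succ]
      have hfac : ((i.factorial : ℝ)) ≠ 0 := Nat.cast_ne_zero.mpr i.factorial_ne_zero
      push_cast
      field_simp
    · rw [if_neg hcond, if_neg hcond, mul_zero, mul_zero]


end

end HDRW
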